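/- Let α ∈ (0, √2 − 1) and let (x_n) ⊆ C, (y_n) ⊆ H, (λ_n) ⊆ (0, ∞) and (τ_n) ⊆ (0, 1] be sequences such that for all n ≥ 1: y_n = (1 + τ_n) x_n − τ_n x_{n−1}, x_{n+1} = P_C(x_n − λ_n F(y_n)), τ_n λ_n ≤ (1 + τ_{n−1}) λ_{n−1}, α/L ≤ λ_n ≤ λ̄ for some fixed λ̄ > 0, and for every z ∈ S the inequality ‖x_{n+1} − z‖² ≤ ‖x_n − z‖² − (1 − α(1+√2)) ‖x_n − y_n‖² − (1 − √2 α) ‖x_{n+1} − y_n‖² + α ‖x_n − y_{n−1}‖² − 2λ_n ⟨F(z), y_n − z⟩ holds. Then (x_n) and (y_n) converge weakly to a common point x* ∈ S. -/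

import Mathlib

set_option maxHeartbeats 1000000

open RealInnerProductSpace Filter

section Aux

variable {H : Type*} [NormedAddCommGroup H] [InnerProductSpace ℝ H] [CompleteSpace H]

lemma wcma_exists_weak_limit (U : Ultrafilter ℕ) (u : ℕ → H) (M : ℝ) (hM : ∀ n, ‖u n‖ ≤ M) :
    ∃ p : H, ∀ v : H, Tendsto (fun n => ⟪u n, v⟫) (U : Filter ℕ) (nhds ⟪p, v⟫) := by
  have hbd : ∀ v : H, ∃ c : ℝ, Tendsto (fun n => ⟪u n, v⟫) (U : Filter ℕ) (nhds c) := by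
    intro v
    have hcomp : IsCompact (Set.Icc (-(M * ‖v‖)) (M * ‖v‖)) := isCompact_Icc
    have hmem : ∀ n, ⟪u n, v⟫ ∈ Set.Icc (-(M * ‖v‖)) (M * ‖v‖) := by
      intro n
      have h1 : |⟪u n, v⟫| ≤ M * ‖v‖ :=
        le_trans (abs_real_inner_le_norm _ _)
          (mul_le_mul_of_nonneg_right (hM n) (norm_nonneg _))
      have h2 := abs_le.mp h1
      exact ⟨h2.1, h2.2⟩
    obtain ⟨c, -, hc⟩ := hcomp.ultrafilter_le_nhds (U.map (fun n => ⟪u n, v⟫))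
      (by
        rw [le_principal_iff, Ultrafilter.mem_coe, Ultrafilter.mem_map]
        exact Filter.univ_mem' hmem)
    exact ⟨c, hc⟩
  choose c hc using hbd
  have hadd : ∀ v w : H, c (v + w) = c v + c w := by
    intro v w
    refine tendsto_nhds_unique (hc (v + w)) ?_
    have := (hc v).add (hc w)
    simpa [inner_add_right] using this
  have hsmul : ∀ (r : ℝ) (v : H), c (r • v) = r * c v := by
    intro r v
    refine tendsto_nhds_unique (hc (r • v)) ?_
    have := (hc v).const_mul r
    simpa [inner_smul_right] using this
  have hbound : ∀ v : H, |c v| ≤ M * ‖v‖ := by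
    intro v
    refine le_of_tendsto (hc v).abs (Filter.Eventually.of_forall fun n => ?_)
    exact le_trans (abs_real_inner_le_norm _ _)
      (mul_le_mul_of_nonneg_right (hM n) (norm_nonneg _))
  let ℓ : H →ₗ[ℝ] ℝ := { toFun := c, map_add' := hadd, map_smul' := hsmul }
  let ℓc : H →L[ℝ] ℝ := LinearMap.mkContinuous ℓ M (fun v => by
    simpa [ℓ, Real.norm_eq_abs] using hbound v)
  refine ⟨(InnerProductSpace.toDual ℝ H).symm ℓc, fun v => ?_⟩
  have h1 : ⟪(InnerProductSpace.toDual ℝ H).symm ℓc, v⟫ = ℓc v :=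
    InnerProductSpace.toDual_symm_apply
  rw [h1]
  exact hc v

lemma wcma_tendsto_zero_of_sq {f : ℕ → ℝ} (h0 : ∀ n, 0 ≤ f n)
    (h : Tendsto (fun n => f n ^ 2) atTop (nhds 0)) : Tendsto f atTop (nhds 0) := by
  have h1 : Tendsto (fun n => Real.sqrt (f n ^ 2)) atTop (nhds (Real.sqrt 0)) := h.sqrt
  simpa [Real.sqrt_sq (h0 _)] using h1

lemma wcma_inner_tendsto_zero {u : ℕ → H} (v : H)
    (h : Tendsto (fun n => ‖u n‖) atTop (nhds 0)) :
    Tendsto (fun n => ⟪u n, v⟫) atTop (nhds 0) := by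
  have hg : Tendsto (fun n => ‖u n‖ * ‖v‖) atTop (nhds 0) := by
    simpa using h.mul_const ‖v‖
  exact squeeze_zero_norm (fun n => abs_real_inner_le_norm _ _) hg

end Aux

/-- Theorem 4.6: weak convergence of the nonstationary projected reflected gradient
algorithm. -/
theorem weak_convergence_of_modified_algorithm
    {H : Type*} [NormedAddCommGroup H] [InnerProductSpace ℝ H] [CompleteSpace H]
    (C : Set H) (hC : C.Nonempty) (hCclosed : IsClosed C) (hCconv : Convex ℝ C)
    (P : H → H)
    (hPmem : ∀ u : H, P u ∈ C)
    (hPchar : ∀ u : H, ∀ y ∈ C, 0 ≤ ⟪P u - u, y - P u⟫)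
    (F : H → H)
    (hmono : ∀ x y : H, 0 ≤ ⟪F x - F y, x - y⟫)
    (L : ℝ) (hL : 0 < L)
    (hlip : ∀ x y : H, ‖F x - F y‖ ≤ L * ‖x - y‖)
    (hS : ∃ z ∈ C, ∀ w ∈ C, 0 ≤ ⟪F z, w - z⟫)
    (α : ℝ) (hα : α ∈ Set.Ioo (0 : ℝ) (Real.sqrt 2 - 1))
    (lamBar : ℝ) (hlamBar : 0 < lamBar)
    (x y : ℕ → H) (lam : ℕ → ℝ) (τ : ℕ → ℝ)
    (hxC : ∀ n, x n ∈ C)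
    (hlampos : ∀ n, 0 < lam n)
    (hτ : ∀ n, τ n ∈ Set.Ioc (0 : ℝ) 1)
    (hyrec : ∀ n : ℕ, 1 ≤ n → y n = (1 + τ n) • x n - τ n • x (n - 1))
    (hxrec : ∀ n : ℕ, 1 ≤ n → x (n + 1) = P (x n - lam n • F (y n)))
    (hlamrec : ∀ n : ℕ, 1 ≤ n → τ n * lam n ≤ (1 + τ (n - 1)) * lam (n - 1))
    (hlambds : ∀ n : ℕ, 1 ≤ n → α / L ≤ lam n ∧ lam n ≤ lamBar)
    (hkey : ∀ n : ℕ, 1 ≤ n → ∀ z : H, z ∈ C → (∀ w ∈ C, 0 ≤ ⟪F z, w - z⟫) →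
      ‖x (n + 1) - z‖ ^ 2 ≤
        ‖x n - z‖ ^ 2 - (1 - α * (1 + Real.sqrt 2)) * ‖x n - y n‖ ^ 2
          - (1 - Real.sqrt 2 * α) * ‖x (n + 1) - y n‖ ^ 2
          + α * ‖x n - y (n - 1)‖ ^ 2 - 2 * lam n * ⟪F z, y n - z⟫) :
    ∃ xstar : H, xstar ∈ C ∧ (∀ w ∈ C, 0 ≤ ⟪F xstar, w - xstar⟫) ∧
      (∀ f : H →L[ℝ] ℝ,
        Filter.Tendsto (fun n : ℕ => f (x n)) Filter.atTop (nhds (f xstar))) ∧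
      (∀ f : H →L[ℝ] ℝ,
        Filter.Tendsto (fun n : ℕ => f (y n)) Filter.atTop (nhds (f xstar))) := by
  obtain ⟨z₀, hz₀C, hz₀S⟩ := hS
  obtain ⟨hα0, hα1⟩ := hα
  have hs2 : Real.sqrt 2 ^ 2 = 2 := Real.sq_sqrt (by norm_num)
  have hs2n : 0 ≤ Real.sqrt 2 := Real.sqrt_nonneg 2
  set c1 : ℝ := 1 - α * (1 + Real.sqrt 2) with hc1def
  have hc1 : 0 < c1 := by nlinarith
  -- lyapunov step inequality
  have hstep : ∀ z, z ∈ C → (∀ w ∈ C, 0 ≤ ⟪F z, w - z⟫) → ∀ k : ℕ,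
      (‖x (k+1+1) - z‖^2 + α * ‖x (k+1+1) - y (k+1)‖^2
        + 2*(1+τ (k+1))*lam (k+1)*⟪F z, x (k+1) - z⟫)
      + c1 * (‖x (k+1) - y (k+1)‖^2 + ‖x (k+1+1) - y (k+1)‖^2)
      ≤ ‖x (k+1) - z‖^2 + α * ‖x (k+1) - y k‖^2 + 2*(1+τ k)*(lam k)*⟪F z, x k - z⟫ := by
    intro z hzC hzS k
    have hkeyn := hkey (k+1) (Nat.le_add_left 1 k) z hzC hzS
    simp only [Nat.add_sub_cancel] at hkeyn
    have hydec : ⟪F z, y (k+1) - z⟫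
        = (1 + τ (k+1)) * ⟪F z, x (k+1) - z⟫ - τ (k+1) * ⟪F z, x k - z⟫ := by
      have hy := hyrec (k+1) (Nat.le_add_left 1 k)
      simp only [Nat.add_sub_cancel] at hy
      have h2 : y (k+1) - z = (1 + τ (k+1)) • (x (k+1) - z) - τ (k+1) • (x k - z) := by
        rw [hy]; module
      rw [h2, inner_sub_right, real_inner_smul_right, real_inner_smul_right]
    rw [hydec] at hkeyn
    have hA1 : 0 ≤ ⟪F z, x k - z⟫ := hzS _ (hxC k)
    have hlam := hlamrec (k+1) (Nat.le_add_left 1 k)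
    simp only [Nat.add_sub_cancel] at hlam
    have hτ1 := hτ (k+1)
    have hτ0 := hτ k
    have hl1 := hlampos (k+1)
    have hcmp : 2 * lam (k+1) * (τ (k+1) * ⟪F z, x k - z⟫)
        ≤ 2*(1+τ k)*(lam k)*⟪F z, x k - z⟫ := by
      nlinarith [hlam, hA1, hτ1.1, hl1]
    nlinarith [hkeyn, hcmp]
  -- nonnegativity of the Lyapunov function
  have hGnonneg : ∀ z, z ∈ C → (∀ w ∈ C, 0 ≤ ⟪F z, w - z⟫) → ∀ k : ℕ,
      0 ≤ ‖x (k+1) - z‖^2 + α * ‖x (k+1) - y k‖^2 + 2*(1+τ k)*(lam k)*⟪F z, x k - z⟫ := by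
    intro z hzC hzS k
    have h1 : 0 ≤ ⟪F z, x k - z⟫ := hzS _ (hxC k)
    have h2 := (hτ k).1
    have h3 := hlampos k
    have h4 : (0:ℝ) ≤ ‖x (k+1) - z‖^2 := sq_nonneg _
    have h5 : (0:ℝ) ≤ ‖x (k+1) - y k‖^2 := sq_nonneg _
    have h6 : (0:ℝ) ≤ 2*(1+τ k)*(lam k) := by nlinarith
    nlinarith [mul_nonneg h6 h1, mul_nonneg hα0.le h5]
  -- antitonicity
  have hGanti : ∀ z, z ∈ C → (∀ w ∈ C, 0 ≤ ⟪F z, w - z⟫) →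
      Antitone (fun k => ‖x (k+1) - z‖^2 + α * ‖x (k+1) - y k‖^2
        + 2*(1+τ k)*(lam k)*⟪F z, x k - z⟫) := by
    intro z hzC hzS
    refine antitone_nat_of_succ_le fun k => ?_
    have h1 := hstep z hzC hzS k
    have h2 : (0:ℝ) ≤ c1 * (‖x (k+1) - y (k+1)‖^2 + ‖x (k+1+1) - y (k+1)‖^2) := by positivity
    linarith
  -- existence of limits of the Lyapunov function
  have hGlim : ∀ z, z ∈ C → (∀ w ∈ C, 0 ≤ ⟪F z, w - z⟫) →
      ∃ l : ℝ, Tendsto (fun k => ‖x (k+1) - z‖^2 + α * ‖x (k+1) - y k‖^2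
        + 2*(1+τ k)*(lam k)*⟪F z, x k - z⟫) atTop (nhds l) := by
    intro z hzC hzS
    refine ⟨_, tendsto_atTop_ciInf (hGanti z hzC hzS) ⟨0, ?_⟩⟩
    rintro r ⟨k, rfl⟩
    exact hGnonneg z hzC hzS k
  obtain ⟨l₀, hl₀⟩ := hGlim z₀ hz₀C hz₀S
  -- vanishing of residuals
  have hl₀' : Tendsto (fun k => ‖x (k+1+1) - z₀‖^2 + α * ‖x (k+1+1) - y (k+1)‖^2
      + 2*(1+τ (k+1))*(lam (k+1))*⟪F z₀, x (k+1) - z₀⟫) atTop (nhds l₀) := by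
    have := hl₀.comp (tendsto_add_atTop_nat 1)
    exact this
  have hdiff : Tendsto (fun k => (‖x (k+1) - z₀‖^2 + α * ‖x (k+1) - y k‖^2
      + 2*(1+τ k)*(lam k)*⟪F z₀, x k - z₀⟫)
      - (‖x (k+1+1) - z₀‖^2 + α * ‖x (k+1+1) - y (k+1)‖^2
      + 2*(1+τ (k+1))*(lam (k+1))*⟪F z₀, x (k+1) - z₀⟫)) atTop (nhds 0) := by
    simpa using hl₀.sub hl₀'
  have hsum0 : Tendsto (fun k => ‖x (k+1) - y (k+1)‖^2 + ‖x (k+1+1) - y (k+1)‖^2)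
      atTop (nhds 0) := by
    have hge : ∀ k, 0 ≤ ‖x (k+1) - y (k+1)‖^2 + ‖x (k+1+1) - y (k+1)‖^2 := by
      intro k; positivity
    refine squeeze_zero hge (fun k => ?_) (by simpa using hdiff.div_const c1)
    have h1 := hstep z₀ hz₀C hz₀S k
    rw [le_div_iff₀ hc1]
    linarith
  have hsq1 : Tendsto (fun k => ‖x (k+1) - y (k+1)‖^2) atTop (nhds 0) := by
    refine squeeze_zero (fun k => sq_nonneg _) (fun k => ?_) hsum0
    nlinarith [sq_nonneg ‖x (k+1+1) - y (k+1)‖]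
  have hsq2 : Tendsto (fun k => ‖x (k+1+1) - y (k+1)‖^2) atTop (nhds 0) := by
    refine squeeze_zero (fun k => sq_nonneg _) (fun k => ?_) hsum0
    nlinarith [sq_nonneg ‖x (k+1) - y (k+1)‖]
  have hd1 : Tendsto (fun n => ‖x n - y n‖) atTop (nhds 0) :=
    (tendsto_add_atTop_iff_nat 1).mp (wcma_tendsto_zero_of_sq (fun k => norm_nonneg _) hsq1)
  have hd2 : Tendsto (fun n => ‖x (n+1) - y n‖) atTop (nhds 0) :=
    (tendsto_add_atTop_iff_nat 1).mp (wcma_tendsto_zero_of_sq (fun k => norm_nonneg _) hsq2)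
  have hd2sq : Tendsto (fun n => ‖x (n+1) - y n‖^2) atTop (nhds 0) :=
    (tendsto_add_atTop_iff_nat 1).mp hsq2
  have hd3 : Tendsto (fun n => ‖x (n+1) - x n‖) atTop (nhds 0) := by
    refine squeeze_zero (fun n => norm_nonneg _) (fun n => ?_) (by simpa using hd2.add hd1)
    calc ‖x (n+1) - x n‖ = ‖(x (n+1) - y n) + (y n - x n)‖ := by rw [sub_add_sub_cancel]
      _ ≤ ‖x (n+1) - y n‖ + ‖y n - x n‖ := norm_add_le _ _
      _ = ‖x (n+1) - y n‖ + ‖x n - y n‖ := by rw [norm_sub_rev (y n)]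
  -- boundedness
  have hxbound : ∃ M : ℝ, ∀ n, ‖x n‖ ≤ M := by
    refine ⟨max ‖x 0‖ (‖z₀‖ + Real.sqrt (‖x 1 - z₀‖^2 + α * ‖x 1 - y 0‖^2
      + 2*(1+τ 0)*(lam 0)*⟪F z₀, x 0 - z₀⟫)), fun n => ?_⟩
    match n with
    | 0 => exact le_max_left _ _
    | (k+1) =>
      refine le_trans ?_ (le_max_right _ _)
      have h1 : ‖x (k+1) - z₀‖^2 ≤ ‖x 1 - z₀‖^2 + α * ‖x 1 - y 0‖^2
          + 2*(1+τ 0)*(lam 0)*⟪F z₀, x 0 - z₀⟫ := by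
        have h2 := hGanti z₀ hz₀C hz₀S (Nat.zero_le k)
        dsimp only at h2
        simp only [zero_add] at h2
        have h3 : (0:ℝ) ≤ α * ‖x (k+1) - y k‖^2 := by positivity
        have h4 : 0 ≤ 2*(1+τ k)*(lam k)*⟪F z₀, x k - z₀⟫ := by
          have ha := hz₀S _ (hxC k); have hb := (hτ k).1; have hc := hlampos k
          have hd : (0:ℝ) ≤ 2*(1+τ k)*(lam k) := by nlinarith
          exact mul_nonneg hd ha
        linarith
      have h5 : ‖x (k+1) - z₀‖ ≤ Real.sqrt (‖x 1 - z₀‖^2 + α * ‖x 1 - y 0‖^2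
          + 2*(1+τ 0)*(lam 0)*⟪F z₀, x 0 - z₀⟫) := by
        have := Real.sqrt_le_sqrt h1
        rwa [Real.sqrt_sq (norm_nonneg _)] at this
      calc ‖x (k+1)‖ ≤ ‖x (k+1) - z₀‖ + ‖z₀‖ := by
            simpa using norm_add_le (x (k+1) - z₀) z₀
        _ ≤ _ := by linarith
  obtain ⟨M, hM⟩ := hxbound
  have hM0 : 0 ≤ M := le_trans (norm_nonneg _) (hM 0)
  -- continuity of F
  have hFcont : Continuous F := by
    have hlw : LipschitzWith (Real.toNNReal L) F := by
      refine LipschitzWith.of_dist_le_mul fun a b => ?_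
      rw [dist_eq_norm, dist_eq_norm, Real.coe_toNNReal _ hL.le]
      exact hlip a b
    exact hlw.continuous
  -- weak limits shift
  have hxshift : ∀ (U : Ultrafilter ℕ), (U : Filter ℕ) ≤ atTop → ∀ p : H,
      (∀ v : H, Tendsto (fun n => ⟪x n, v⟫) (U : Filter ℕ) (nhds ⟪p, v⟫)) →
      ∀ v : H, Tendsto (fun n => ⟪x (n+1), v⟫) (U : Filter ℕ) (nhds ⟪p, v⟫) := by
    intro U hU p hp v
    have h0 : Tendsto (fun n => ⟪x (n+1) - x n, v⟫) atTop (nhds 0) :=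
      wcma_inner_tendsto_zero v hd3
    have h1 := (hp v).add (h0.mono_left hU)
    have h2 : ∀ n, ⟪x n, v⟫ + ⟪x (n+1) - x n, v⟫ = ⟪x (n+1), v⟫ := by
      intro n; rw [inner_sub_left]; ring
    have h3 : (⟪p, v⟫ : ℝ) + 0 = ⟪p, v⟫ := by ring
    rw [h3] at h1
    exact h1.congr h2
  -- the main per-ultrafilter construction
  have main : ∀ U : Ultrafilter ℕ, (U : Filter ℕ) ≤ atTop →
      ∃ p : H, p ∈ C ∧ (∀ w ∈ C, 0 ≤ ⟪F p, w - p⟫) ∧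
        ∀ v : H, Tendsto (fun n => ⟪x n, v⟫) (U : Filter ℕ) (nhds ⟪p, v⟫) := by
    intro U hU
    obtain ⟨p, hp⟩ := wcma_exists_weak_limit U x M hM
    -- p ∈ C
    have hpC : p ∈ C := by
      by_contra hpc
      obtain ⟨f, u, hfu, hup⟩ := geometric_hahn_banach_closed_point hCconv hCclosed hpc
      set vf := (InnerProductSpace.toDual ℝ H).symm f with hvf
      have hfv : ∀ w : H, f w = ⟪vf, w⟫ := fun w =>
        (InnerProductSpace.toDual_symm_apply).symm
      have hfx : Tendsto (fun n => f (x n)) (U : Filter ℕ) (nhds (f p)) := by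
        have h1 := hp vf
        have h2 : ∀ n, ⟪x n, vf⟫ = f (x n) := fun n => by
          rw [hfv, real_inner_comm]
        have h3 : (⟪p, vf⟫ : ℝ) = f p := by rw [hfv, real_inner_comm]
        rw [h3] at h1
        exact h1.congr h2
      have hle : f p ≤ u :=
        le_of_tendsto hfx (Filter.Eventually.of_forall fun n => (hfu _ (hxC n)).le)
      linarith
    -- weak convergence of y along U
    have hpy : ∀ v : H, Tendsto (fun n => ⟪y n, v⟫) (U : Filter ℕ) (nhds ⟪p, v⟫) := by
      intro v
      have h0 : Tendsto (fun n => ⟪y n - x n, v⟫) atTop (nhds 0) := by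
        refine wcma_inner_tendsto_zero v ?_
        have : (fun n => ‖y n - x n‖) = fun n => ‖x n - y n‖ := by
          funext n; rw [norm_sub_rev]
        rw [this]; exact hd1
      have h1 := (hp v).add (h0.mono_left hU)
      have h2 : ∀ n, ⟪x n, v⟫ + ⟪y n - x n, v⟫ = ⟪y n, v⟫ := by
        intro n; rw [inner_sub_left]; ring
      have h3 : (⟪p, v⟫ : ℝ) + 0 = ⟪p, v⟫ := by ring
      rw [h3] at h1
      exact h1.congr h2
    -- Minty condition
    have hminty : ∀ w ∈ C, 0 ≤ ⟪F w, w - p⟫ := by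
      intro w hw
      -- the lower-bound sequence
      set h : ℕ → ℝ := fun n => ⟪F (y n), x (n+1) - y n⟫
        + (lam n)⁻¹ * ⟪x n - x (n+1), w - x (n+1)⟫ with hh
      have hgh : ∀ n : ℕ, 1 ≤ n → h n ≤ ⟪F w, w - y n⟫ := by
        intro n hn
        have hproj := hPchar (x n - lam n • F (y n)) w hw
        rw [← hxrec n hn] at hproj
        have hexp : x (n+1) - (x n - lam n • F (y n))
            = (x (n+1) - x n) + lam n • F (y n) := by module
        rw [hexp, inner_add_left, real_inner_smul_left] at hproj
        have hmon := hmono w (y n)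
        rw [inner_sub_left, inner_sub_right] at hmon
        have hsplit : ⟪F (y n), w - y n⟫
            = ⟪F (y n), w - x (n+1)⟫ + ⟪F (y n), x (n+1) - y n⟫ := by
          rw [← inner_add_right]; congr 1; module
        have hneg : ⟪x (n+1) - x n, w - x (n+1)⟫ = - ⟪x n - x (n+1), w - x (n+1)⟫ := by
          rw [← inner_neg_left]; congr 1; module
        rw [hneg] at hproj
        have hdiv : (lam n)⁻¹ * ⟪x n - x (n+1), w - x (n+1)⟫ ≤ ⟪F (y n), w - x (n+1)⟫ := by
          rw [inv_mul_le_iff₀ (hlampos n)]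
          linarith
        have hFw : ⟪F w, w - y n⟫ = ⟪F w, w⟫ - ⟪F w, y n⟫ := inner_sub_right _ _ _
        simp only [hh]
        have hyn : ⟪F (y n), w - y n⟫ ≤ ⟪F w, w - y n⟫ := by
          rw [inner_sub_right, inner_sub_right] at *
          linarith
        rw [hsplit] at hyn
        linarith
      -- h tends to zero
      have hh0 : Tendsto h atTop (nhds 0) := by
        have hMF : ∀ᶠ n in atTop, ‖F (y n)‖ ≤ L * (M + 1) + ‖F 0‖ := by
          have h1 : ∀ᶠ n in atTop, ‖x n - y n‖ ≤ 1 :=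
            hd1.eventually_le_const (by norm_num)
          refine h1.mono fun n h2 => ?_
          have h3 : ‖y n‖ ≤ M + 1 := by
            calc ‖y n‖ ≤ ‖x n‖ + ‖y n - x n‖ := by
                  simpa using norm_add_le (x n) (y n - x n)
              _ = ‖x n‖ + ‖x n - y n‖ := by rw [norm_sub_rev]
              _ ≤ M + 1 := add_le_add (hM n) h2
          calc ‖F (y n)‖ ≤ ‖F (y n) - F 0‖ + ‖F 0‖ := by
                simpa using norm_add_le (F (y n) - F 0) (F 0)
            _ ≤ L * ‖y n - 0‖ + ‖F 0‖ := by linarith [hlip (y n) 0]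
            _ ≤ L * (M + 1) + ‖F 0‖ := by
                have : ‖y n - 0‖ = ‖y n‖ := by rw [sub_zero]
                rw [this]
                have := mul_le_mul_of_nonneg_left h3 hL.le
                linarith
        have hbd : ∀ᶠ n in atTop, ‖h n‖ ≤ (L * (M + 1) + ‖F 0‖) * ‖x (n+1) - y n‖
            + (L / α) * ((‖w‖ + M) * ‖x (n+1) - x n‖) := by
          filter_upwards [hMF, eventually_ge_atTop 1] with n h2 hn
          have hb1 : |⟪F (y n), x (n+1) - y n⟫| ≤ (L * (M + 1) + ‖F 0‖) * ‖x (n+1) - y n‖ := by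
            refine le_trans (abs_real_inner_le_norm _ _) ?_
            exact mul_le_mul_of_nonneg_right h2 (norm_nonneg _)
          have hlaminv : (lam n)⁻¹ ≤ L / α := by
            have h3 := (hlambds n hn).1
            have h4 : 0 < α / L := div_pos hα0 hL
            have h5 := inv_anti₀ h4 h3
            rwa [inv_div] at h5
          have hb2 : |⟪x n - x (n+1), w - x (n+1)⟫| ≤ (‖w‖ + M) * ‖x (n+1) - x n‖ := by
            refine le_trans (abs_real_inner_le_norm _ _) ?_
            rw [norm_sub_rev (x n), mul_comm]
            refine mul_le_mul_of_nonneg_right ?_ (norm_nonneg _)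
            calc ‖w - x (n+1)‖ ≤ ‖w‖ + ‖x (n+1)‖ := norm_sub_le _ _
              _ ≤ ‖w‖ + M := by linarith [hM (n+1)]
          have hb3 : |(lam n)⁻¹ * ⟪x n - x (n+1), w - x (n+1)⟫|
              ≤ (L / α) * ((‖w‖ + M) * ‖x (n+1) - x n‖) := by
            rw [abs_mul, abs_of_nonneg (inv_nonneg.mpr (hlampos n).le)]
            refine mul_le_mul hlaminv hb2 (abs_nonneg _) ?_
            positivity
          calc ‖h n‖ ≤ |⟪F (y n), x (n+1) - y n⟫|
                + |(lam n)⁻¹ * ⟪x n - x (n+1), w - x (n+1)⟫| := by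
                simp only [hh, Real.norm_eq_abs]
                exact abs_add_le _ _
            _ ≤ _ := by linarith
        refine squeeze_zero_norm' hbd ?_
        have t1 : Tendsto (fun n => (L * (M + 1) + ‖F 0‖) * ‖x (n+1) - y n‖)
              atTop (nhds 0) := by simpa using hd2.const_mul (L * (M + 1) + ‖F 0‖)
        have t2 : Tendsto (fun n => (L / α) * ((‖w‖ + M) * ‖x (n+1) - x n‖))
            atTop (nhds 0) := by
          have := (hd3.const_mul (‖w‖ + M)).const_mul (L / α)
          simpa using this
        simpa using t1.add t2
      -- limit of the upper bound
      have hglim : Tendsto (fun n => ⟪F w, w - y n⟫) (U : Filter ℕ) (nhds ⟪F w, w - p⟫) := by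
        have h1 := hpy (F w)
        have h2 : ∀ n, ⟪F w, w⟫ - ⟪y n, F w⟫ = ⟪F w, w - y n⟫ := by
          intro n; rw [inner_sub_right, real_inner_comm (y n)]
        have h3 : (⟪F w, w⟫ : ℝ) - ⟪p, F w⟫ = ⟪F w, w - p⟫ := by
          rw [inner_sub_right, real_inner_comm p]
        have h4 := (tendsto_const_nhds (x := (⟪F w, w⟫ : ℝ))
          (f := (U : Filter ℕ))).sub h1
        rw [h3] at h4
        exact h4.congr h2
      have hev : ∀ᶠ n in (U : Filter ℕ), 1 ≤ n := hU (eventually_ge_atTop 1)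
      have hhU : Tendsto h (U : Filter ℕ) (nhds 0) := hh0.mono_left hU
      -- 0 ≤ lim g since h ≤ g and h → 0... use: lim g ≥ lim h = 0
      exact le_of_tendsto_of_tendsto hhU hglim (hev.mono hgh)
    -- Minty implies Stampacchia
    have hsol : ∀ w ∈ C, 0 ≤ ⟪F p, w - p⟫ := by
      intro w hw
      have hmem : ∀ k : ℕ, p + ((k:ℝ)+1)⁻¹ • (w - p) ∈ C := by
        intro k
        have hk1 : (0:ℝ) < (k:ℝ) + 1 := by positivity
        have ht0 : (0:ℝ) < ((k:ℝ)+1)⁻¹ := inv_pos.mpr hk1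
        have ht1 : ((k:ℝ)+1)⁻¹ ≤ 1 := by
          rw [inv_le_one_iff₀]; right; linarith [Nat.cast_nonneg (α := ℝ) k]
        have := hCconv hpC hw (by linarith : (0:ℝ) ≤ 1 - ((k:ℝ)+1)⁻¹) ht0.le (by ring)
        have heq : (1 - ((k:ℝ)+1)⁻¹) • p + ((k:ℝ)+1)⁻¹ • w
            = p + ((k:ℝ)+1)⁻¹ • (w - p) := by module
        rwa [heq] at this
      have hterm : ∀ k : ℕ, 0 ≤ ⟪F (p + ((k:ℝ)+1)⁻¹ • (w - p)), w - p⟫ := by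
        intro k
        have hk1 : (0:ℝ) < (k:ℝ) + 1 := by positivity
        have ht0 : (0:ℝ) < ((k:ℝ)+1)⁻¹ := inv_pos.mpr hk1
        have h1 := hminty _ (hmem k)
        have h2 : p + ((k:ℝ)+1)⁻¹ • (w - p) - p = ((k:ℝ)+1)⁻¹ • (w - p) := by module
        rw [h2, real_inner_smul_right] at h1
        exact nonneg_of_mul_nonneg_right h1 ht0
      have hseq : Tendsto (fun k : ℕ => p + ((k:ℝ)+1)⁻¹ • (w - p)) atTop (nhds p) := by
        have hz : Tendsto (fun k : ℕ => ((k:ℝ)+1)⁻¹) atTop (nhds 0) := by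
          simpa [one_div] using (tendsto_one_div_add_atTop_nhds_zero_nat : Tendsto (fun n : ℕ => 1 / ((n : ℝ) + 1)) atTop (nhds 0))
        have := (hz.smul_const (w - p)).const_add p
        simpa using this
      have hcont : Continuous fun u : H => ⟪F u, w - p⟫ :=
        Continuous.inner hFcont continuous_const
      have hlim : Tendsto (fun k : ℕ => ⟪F (p + ((k:ℝ)+1)⁻¹ • (w - p)), w - p⟫)
          atTop (nhds ⟪F p, w - p⟫) := by
        have := (hcont.tendsto p).comp hseq
        exact this
      exact ge_of_tendsto hlim (Filter.Eventually.of_forall hterm)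
    exact ⟨p, hpC, hsol, hp⟩
  -- b-terms vanish along an ultrafilter whose weak limit is the base point
  have hblim0 : ∀ (U : Ultrafilter ℕ), (U : Filter ℕ) ≤ atTop → ∀ p : H,
      (∀ v : H, Tendsto (fun n => ⟪x n, v⟫) (U : Filter ℕ) (nhds ⟪p, v⟫)) →
      Tendsto (fun k => 2*(1+τ k)*(lam k)*⟪F p, x k - p⟫) (U : Filter ℕ) (nhds 0) := by
    intro U hU p hp
    have hA : Tendsto (fun k => ⟪F p, x k - p⟫) (U : Filter ℕ) (nhds 0) := by
      have h1 := (hp (F p)).sub_const ⟪p, F p⟫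
      have h2 : ∀ k, ⟪x k, F p⟫ - ⟪p, F p⟫ = ⟪F p, x k - p⟫ := by
        intro k
        rw [inner_sub_right, real_inner_comm (x k) (F p), real_inner_comm p (F p)]
      have h3 : (⟪p, F p⟫ : ℝ) - ⟪p, F p⟫ = 0 := by ring
      rw [h3] at h1
      exact h1.congr h2
    refine squeeze_zero_norm' ?_ (by simpa using hA.abs.const_mul (4*lamBar))
    filter_upwards [hU (eventually_ge_atTop 1)] with k hk
    have h1a := (hτ k).1
    have h1b := (hτ k).2
    have h2 := hlampos k
    have h3 := (hlambds k hk).2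
    rw [Real.norm_eq_abs, abs_mul]
    have h4 : |2*(1+τ k)*(lam k)| ≤ 4*lamBar := by
      rw [abs_of_nonneg (by nlinarith : (0:ℝ) ≤ 2*(1+τ k)*(lam k))]
      nlinarith
    calc |2*(1+τ k)*(lam k)| * |⟪F p, x k - p⟫| ≤ 4*lamBar * |⟪F p, x k - p⟫| :=
          mul_le_mul_of_nonneg_right h4 (abs_nonneg _)
      _ = 4*lamBar*|⟪F p, x k - p⟫| := by ring
  -- limits of the reduced Lyapunov function
  have habl : ∀ z, z ∈ C → (∀ w ∈ C, 0 ≤ ⟪F z, w - z⟫) →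
      ∃ l : ℝ, Tendsto (fun k => ‖x (k+1) - z‖^2 + 2*(1+τ k)*(lam k)*⟪F z, x k - z⟫)
        atTop (nhds l) := by
    intro z hzC hzS
    obtain ⟨l, hl⟩ := hGlim z hzC hzS
    have hd2sq' : Tendsto (fun k => α * ‖x (k+1) - y k‖^2) atTop (nhds 0) := by
      simpa using hd2sq.const_mul α
    refine ⟨l - 0, ?_⟩
    have := hl.sub hd2sq'
    refine this.congr fun k => by ring
  -- the Opial-type inequality
  have hopial : ∀ (U : Ultrafilter ℕ), (U : Filter ℕ) ≤ atTop → ∀ (p q : H) (lp lq : ℝ),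
      (∀ v : H, Tendsto (fun n => ⟪x n, v⟫) (U : Filter ℕ) (nhds ⟪p, v⟫)) →
      (∀ w ∈ C, 0 ≤ ⟪F q, w - q⟫) →
      Tendsto (fun k => ‖x (k+1) - p‖^2 + 2*(1+τ k)*(lam k)*⟪F p, x k - p⟫) atTop (nhds lp) →
      Tendsto (fun k => ‖x (k+1) - q‖^2 + 2*(1+τ k)*(lam k)*⟪F q, x k - q⟫) atTop (nhds lq) →
      lp + ‖p - q‖^2 ≤ lq := by
    intro U hU p q lp lq hp hqS hlp hlq
    have h1 : Tendsto (fun k =>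
        (‖x (k+1) - q‖^2 + 2*(1+τ k)*(lam k)*⟪F q, x k - q⟫)
        - (‖x (k+1) - p‖^2 + 2*(1+τ k)*(lam k)*⟪F p, x k - p⟫))
        (U : Filter ℕ) (nhds (lq - lp)) :=
      (hlq.sub hlp).mono_left hU
    have hps := hxshift U hU p hp
    have h2 : Tendsto (fun k => ‖x (k+1) - q‖^2 - ‖x (k+1) - p‖^2)
        (U : Filter ℕ) (nhds (‖p - q‖^2)) := by
      have t1 := ((hps q).const_mul (-2)).add (((hps p).const_mul 2).add_const
        (‖q‖^2 - ‖p‖^2))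
      have hval : (-2) * ⟪p, q⟫ + (2 * ⟪p, p⟫ + (‖q‖^2 - ‖p‖^2)) = ‖p - q‖^2 := by
        rw [norm_sub_sq_real, real_inner_self_eq_norm_sq]
        ring
      rw [hval] at t1
      refine t1.congr fun k => ?_
      rw [norm_sub_sq_real (x (k+1)) q, norm_sub_sq_real (x (k+1)) p]
      ring
    have h3 : Tendsto (fun k => 2*(1+τ k)*(lam k)*⟪F q, x k - q⟫)
        (U : Filter ℕ) (nhds (lq - lp - ‖p - q‖^2 + 0)) := by
      have := (h1.sub h2).add (hblim0 U hU p hp)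
      refine this.congr fun k => ?_
      ring
    have h4 : 0 ≤ lq - lp - ‖p - q‖^2 + 0 := by
      refine ge_of_tendsto h3 (Filter.Eventually.of_forall fun k => ?_)
      have ha := hqS _ (hxC k)
      have hb := (hτ k).1
      have hc := hlampos k
      have hd : (0:ℝ) ≤ 2*(1+τ k)*(lam k) := by nlinarith
      exact mul_nonneg hd ha
    linarith
  -- fix a reference ultrafilter and conclude
  obtain ⟨p, hpC, hpS, hpw⟩ := main (Ultrafilter.of atTop) (Ultrafilter.of_le atTop)
  obtain ⟨lp, hlp⟩ := habl p hpC hpS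
  have huniq : ∀ (V : Ultrafilter ℕ), (V : Filter ℕ) ≤ atTop → ∀ q : H, q ∈ C →
      (∀ w ∈ C, 0 ≤ ⟪F q, w - q⟫) →
      (∀ v : H, Tendsto (fun n => ⟪x n, v⟫) (V : Filter ℕ) (nhds ⟪q, v⟫)) → q = p := by
    intro V hV q hqC hqS hqw
    obtain ⟨lq, hlq⟩ := habl q hqC hqS
    have e1 := hopial (Ultrafilter.of atTop) (Ultrafilter.of_le atTop) p q lp lq hpw hqS hlp hlq
    have e2 := hopial V hV q p lq lp hqw hpS hlq hlp
    have e3 : ‖q - p‖ = ‖p - q‖ := norm_sub_rev _ _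
    rw [e3] at e2
    have e4 : ‖p - q‖^2 ≤ 0 := by linarith
    have e5 : ‖p - q‖ = 0 := by nlinarith [norm_nonneg (p - q)]
    have e6 : p - q = 0 := norm_eq_zero.mp e5
    have : p = q := by
      have := sub_eq_zero.mp e6
      exact this
    exact this.symm
  -- weak convergence of x
  have hxconv : ∀ f : H →L[ℝ] ℝ, Tendsto (fun n : ℕ => f (x n)) atTop (nhds (f p)) := by
    intro f
    rw [tendsto_iff_ultrafilter]
    intro V hV
    obtain ⟨q, hqC, hqS, hqw⟩ := main V hV
    have hqp : q = p := huniq V hV q hqC hqS hqw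
    subst hqp
    set vf := (InnerProductSpace.toDual ℝ H).symm f with hvf
    have hfv : ∀ w : H, f w = ⟪vf, w⟫ := fun w =>
      (InnerProductSpace.toDual_symm_apply).symm
    have h1 := hqw vf
    have h2 : ∀ n, ⟪x n, vf⟫ = f (x n) := fun n => by rw [hfv, real_inner_comm]
    have h3 : (⟪q, vf⟫ : ℝ) = f q := by rw [hfv, real_inner_comm]
    rw [h3] at h1
    exact h1.congr h2
  have hyconv : ∀ f : H →L[ℝ] ℝ, Tendsto (fun n : ℕ => f (y n)) atTop (nhds (f p)) := by
    intro f
    have h0 : Tendsto (fun n => f (y n) - f (x n)) atTop (nhds 0) := by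
      refine squeeze_zero_norm (fun n => ?_) (by simpa using hd1.const_mul ‖f‖)
      have h1 : f (y n) - f (x n) = f (y n - x n) := by rw [map_sub]
      rw [h1]
      calc ‖f (y n - x n)‖ ≤ ‖f‖ * ‖y n - x n‖ := f.le_opNorm _
        _ = ‖f‖ * ‖x n - y n‖ := by rw [norm_sub_rev (y n)]
    have h2 := (hxconv f).add h0
    rw [add_zero] at h2
    refine h2.congr fun n => by ring
  exact ⟨p, hpC, hpS, hxconv, hyconv⟩
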